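/- With c₁, c₂, λ₁, λ₂ as in Zhao's example and σ(t,y) = λ₁ 1_{|y| ≤ 2√t} + λ₂ 1_{|y| > 2√t}, the coefficient Σ(t,μ) = ∫_ℝ σ(t,y) μ(dy) satisfies Σ(t, N(0,t)) = 1 and Σ(t, N(0,4t)) = 2 for every t > 0. -/

import Mathlib

open MeasureTheory ProbabilityTheory
open scoped NNReal

lemma zhao_gauss_scale (v : ℝ≥0) (t : ℝ) (ht : 0 < t) :
    gaussianReal 0 ((t * (v : ℝ)).toNNReal) {y : ℝ | |y| ≤ 2 * Real.sqrt t}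
      = gaussianReal 0 v (Set.Icc (-2 : ℝ) 2) := by
  have hst : (0:ℝ) < Real.sqrt t := Real.sqrt_pos.mpr ht
  have hmap := gaussianReal_map_const_mul (μ := 0) (v := v) (Real.sqrt t)
  have hvar : (NNReal.mk ((Real.sqrt t)^2) (sq_nonneg _) * v : ℝ≥0) = (t * (v : ℝ)).toNNReal := by
    ext
    rw [Real.coe_toNNReal _ (by positivity)]
    push_cast
    rw [Real.sq_sqrt ht.le]
  rw [← hvar, mul_zero] at *
  rw [← hmap, Measure.map_apply (measurable_const_mul _)
    (measurableSet_le (by fun_prop) measurable_const)]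
  congr 1
  ext x
  simp only [Set.mem_preimage, Set.mem_setOf_eq, Set.mem_Icc, ← abs_le, abs_mul,
    abs_of_pos hst]
  rw [mul_comm 2 (Real.sqrt t), mul_le_mul_iff_right₀ hst]

lemma zhao_integral (μ : Measure ℝ) [IsProbabilityMeasure μ] (l1 l2 : ℝ) (t : ℝ)
    (ht : 0 < t) :
    (∫ y, (if |y| ≤ 2 * Real.sqrt t then l1 else l2) ∂μ)
      = (μ {y : ℝ | |y| ≤ 2 * Real.sqrt t}).toReal * (l1 - l2) + l2 := by
  have hA : MeasurableSet {y : ℝ | |y| ≤ 2 * Real.sqrt t} :=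
    measurableSet_le (by fun_prop) measurable_const
  have : ∀ y : ℝ, (if |y| ≤ 2 * Real.sqrt t then l1 else l2)
      = Set.indicator {y : ℝ | |y| ≤ 2 * Real.sqrt t} (fun _ => l1 - l2) y + l2 := by
    intro y
    by_cases h : |y| ≤ 2 * Real.sqrt t <;>
      simp [Set.indicator_apply, Set.mem_setOf_eq, h]
  simp_rw [this]
  rw [integral_add ((integrable_const _).indicator hA) (integrable_const _),
    integral_indicator_const _ hA, integral_const]
  simp [smul_eq_mul, measureReal_def]

/-- In Zhao's example, with `σ(t,y) = λ₁ 1_{|y|≤2√t} + λ₂ 1_{|y|>2√t}` and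
`Σ(t,μ) = ∫ σ(t,y) μ(dy)`, one has `Σ(t, N(0,t)) = 1` and `Σ(t, N(0,4t)) = 2` for all `t > 0`. -/
theorem zhao_sigma_values (l1 l2 : ℝ)
    (h1 : (gaussianReal 0 1 (Set.Icc (-2 : ℝ) 2)).toReal * l1 +
      (1 - (gaussianReal 0 1 (Set.Icc (-2 : ℝ) 2)).toReal) * l2 = 1)
    (h2 : (gaussianReal 0 4 (Set.Icc (-2 : ℝ) 2)).toReal * l1 +
      (1 - (gaussianReal 0 4 (Set.Icc (-2 : ℝ) 2)).toReal) * l2 = 2)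
    (σ : ℝ → ℝ → ℝ)
    (hσ : ∀ t y, σ t y = if |y| ≤ 2 * Real.sqrt t then l1 else l2) :
    ∀ t : ℝ, 0 < t →
      (∫ y, σ t y ∂(gaussianReal 0 t.toNNReal)) = 1 ∧
      (∫ y, σ t y ∂(gaussianReal 0 (4 * t).toNNReal)) = 2 := by
  intro t ht
  have e1 : t.toNNReal = (t * ((1:ℝ≥0) : ℝ)).toNNReal := by norm_num
  have e2 : (4 * t).toNNReal = (t * ((4:ℝ≥0) : ℝ)).toNNReal := by
    rw [mul_comm]; norm_num
  have key1 := zhao_gauss_scale 1 t ht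
  have key2 := zhao_gauss_scale 4 t ht
  have m1 : ((gaussianReal 0 t.toNNReal) {y : ℝ | |y| ≤ 2 * Real.sqrt t}).toReal
      = (gaussianReal 0 1 (Set.Icc (-2 : ℝ) 2)).toReal := by rw [e1, key1]
  have m2 : ((gaussianReal 0 (4 * t).toNNReal) {y : ℝ | |y| ≤ 2 * Real.sqrt t}).toReal
      = (gaussianReal 0 4 (Set.Icc (-2 : ℝ) 2)).toReal := by rw [e2, key2]
  constructor
  · simp_rw [hσ]
    rw [zhao_integral _ l1 l2 t ht, m1]
    nlinarith [h1]
  · simp_rw [hσ]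
    rw [zhao_integral _ l1 l2 t ht, m2]
    nlinarith [h2]
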